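/- Let α be a positive irrational number and n a natural number. If some convergent denominator q_k of the continued fraction expansion of α satisfies n ∣ q_k and n < q_k, writing q_k = n·q'_k and p_k for the corresponding convergent numerator, then p_k/q'_k is a convergent of the continued fraction expansion of n·α, and consequently B(n·α) ≥ n. -/

import Mathlib

/-- The Gauss map iteration. -/
noncomputable def gaussIter (α : ℝ) : ℕ → ℝ
  | 0 => α
  | n + 1 => (gaussIter α n - ⌊gaussIter α n⌋)⁻¹

/-- The `n`-th partial quotient of the continued fraction expansion of `α`. -/
noncomputable def cfq (α : ℝ) (n : ℕ) : ℤ := ⌊gaussIter α n⌋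

/-- Convergent numerators: `convP α (k+1)` is the `k`-th convergent numerator `p_k`,
with `convP α 0 = 1` playing the role of `p₋₁`. -/
noncomputable def convP (α : ℝ) : ℕ → ℤ
  | 0 => 1
  | 1 => cfq α 0
  | k + 2 => cfq α (k + 1) * convP α (k + 1) + convP α k

/-- Convergent denominators: `convQ α (k+1)` is the `k`-th convergent denominator `q_k`,
with `convQ α 0 = 0` playing the role of `q₋₁`. -/
noncomputable def convQ (α : ℝ) : ℕ → ℤ
  | 0 => 0
  | 1 => 1
  | k + 2 => cfq α (k + 1) * convQ α (k + 1) + convQ α k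

/-- `r` is a convergent of the continued fraction expansion of `β`. -/
noncomputable def IsConvergent (β : ℝ) (r : ℚ) : Prop :=
  ∃ j : ℕ, r = (convP β (j + 1) : ℚ) / (convQ β (j + 1) : ℚ)

/-- if a convergent denominator `q_k` of a positive irrational `α`
satisfies `n ∣ q_k` and `n < q_k`, writing `q_k = n·q'_k`, then `p_k/q'_k` is a
convergent of `n·α`, and hence `B(n·α) ≥ n`. -/

/- ### basic gauss iteration facts -/

lemma irr_gaussIter {β : ℝ} (h : Irrational β) : ∀ i, Irrational (gaussIter β i) := by
  intro i; induction i with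
  | zero => exact h
  | succ n ih =>
    show Irrational (gaussIter β n - ⌊gaussIter β n⌋)⁻¹
    exact ((ih.sub_intCast _)).inv

lemma gaussIter_gt_one {β : ℝ} (h : Irrational β) (i : ℕ) : 1 < gaussIter β (i + 1) := by
  have h1 : Irrational (gaussIter β i) := irr_gaussIter h i
  have h2 : 0 < Int.fract (gaussIter β i) :=
    Int.fract_pos.2 (fun hx => h1.ne_int _ hx)
  have h3 : Int.fract (gaussIter β i) < 1 := Int.fract_lt_one _
  show 1 < (gaussIter β i - ⌊gaussIter β i⌋)⁻¹
  rw [show gaussIter β i - (⌊gaussIter β i⌋ : ℝ) = Int.fract (gaussIter β i) from rfl]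
  exact one_lt_inv_iff₀.2 ⟨h2, h3⟩

lemma cfq_pos {β : ℝ} (h : Irrational β) (i : ℕ) : 1 ≤ cfq β (i + 1) := by
  have := gaussIter_gt_one h i
  exact Int.le_floor.2 (by exact_mod_cast this.le)

lemma gaussIter_succ' (β : ℝ) (j : ℕ) :
    gaussIter β (j + 1) = gaussIter (gaussIter β 1) j := by
  induction j with
  | zero => rfl
  | succ n ih =>
    show (gaussIter β (n+1) - ⌊gaussIter β (n+1)⌋)⁻¹ = _
    rw [ih]; rfl

lemma cfq_succ' (β : ℝ) (j : ℕ) : cfq β (j + 1) = cfq (gaussIter β 1) j := by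
  unfold cfq; rw [gaussIter_succ']
/- ### generic continuants -/

def genP (a : ℕ → ℤ) : ℕ → ℤ
  | 0 => 1
  | 1 => a 0
  | k + 2 => a (k + 1) * genP a (k + 1) + genP a k

def genQ (a : ℕ → ℤ) : ℕ → ℤ
  | 0 => 0
  | 1 => 1
  | k + 2 => a (k + 1) * genQ a (k + 1) + genQ a k

lemma genP_congr {a b : ℕ → ℤ} : ∀ {j : ℕ}, (∀ i < j, a i = b i) → genP a j = genP b j
  | 0, _ => rfl
  | 1, h => by simpa [genP] using h 0 (by norm_num)
  | (k+2), h => by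
      rw [genP, genP, genP_congr (fun i hi => h i (by omega)),
        genP_congr (a := a) (b := b) (fun i hi => h i (by omega)), h (k+1) (by omega)]

lemma genQ_congr {a b : ℕ → ℤ} : ∀ {j : ℕ}, (∀ i < j, a i = b i) → genQ a j = genQ b j
  | 0, _ => rfl
  | 1, h => rfl
  | (k+2), h => by
      rw [genQ, genQ, genQ_congr (fun i hi => h i (by omega)),
        genQ_congr (a := a) (b := b) (fun i hi => h i (by omega)), h (k+1) (by omega)]

/-- convP is the generic continuant of the partial quotient sequence. -/
lemma convP_eq (β : ℝ) : ∀ j, convP β j = genP (cfq β) j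
  | 0 => rfl
  | 1 => rfl
  | (k+2) => by rw [convP, genP, convP_eq β (k+1), convP_eq β k]

lemma convQ_eq (β : ℝ) : ∀ j, convQ β j = genQ (cfq β) j
  | 0 => rfl
  | 1 => rfl
  | (k+2) => by rw [convQ, genQ, convQ_eq β (k+1), convQ_eq β k]

/-- positivity/monotonicity of continuant denominators. -/
lemma genQ_pos {a : ℕ → ℤ} (ha : ∀ i, 1 ≤ i → 1 ≤ a i) :
    ∀ j, 0 ≤ genQ a j ∧ 1 ≤ genQ a (j + 1) ∧ genQ a j ≤ genQ a (j + 1)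
  | 0 => ⟨le_refl _, le_refl _, by norm_num [genQ]⟩
  | (k+1) => by
      obtain ⟨h0, h1, h2⟩ := genQ_pos ha k
      have hk : 1 ≤ a (k+1) := ha _ (by omega)
      refine ⟨by linarith, ?_, ?_⟩
      · show 1 ≤ a (k+1) * genQ a (k+1) + genQ a k
        nlinarith
      · show genQ a (k+1) ≤ a (k+1) * genQ a (k+1) + genQ a k
        nlinarith

lemma genP_pos {a : ℕ → ℤ} (ha : ∀ i, 1 ≤ a i) :
    ∀ j, 1 ≤ genP a j ∧ (j ≠ 0 → genP a (j-1) ≤ genP a j)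
  | 0 => ⟨le_refl _, by omega⟩
  | 1 => ⟨ha 0, fun _ => by show (1:ℤ) ≤ a 0; exact ha 0⟩
  | (k+2) => by
      obtain ⟨h1, _⟩ := genP_pos ha (k+1)
      obtain ⟨h0, _⟩ := genP_pos ha k
      have hk : 1 ≤ a (k+1) := ha _
      refine ⟨?_, fun _ => ?_⟩
      · show 1 ≤ a (k+1) * genP a (k+1) + genP a k; nlinarith
      · show genP a (k+1) ≤ a (k+1) * genP a (k+1) + genP a k; nlinarith

/-- determinant identity. -/
lemma gen_det (a : ℕ → ℤ) : ∀ m, genP a m * genQ a (m+1) - genP a (m+1) * genQ a m = (-1)^m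
  | 0 => by simp [genP, genQ]
  | (m+1) => by
      have := gen_det a m
      rw [show m+1+1 = m+2 from rfl, genP, genQ]
      ring_nf
      ring_nf at this
      linarith [this]

/-- cons identities -/
lemma genP_cons (a0 : ℤ) (a : ℕ → ℤ) :
    ∀ j, genP (fun i => Nat.casesOn i a0 a) (j+1) = a0 * genP a j + genQ a j
  | 0 => by simp [genP, genQ]
  | 1 => by simp [genP, genQ]; ring
  | (k+2) => by
      rw [show k+2+1 = (k+1)+2 from rfl, genP, genP_cons a0 a (k+1), genP_cons a0 a k,
        genP, genQ]
      ring

lemma genQ_cons (a0 : ℤ) (a : ℕ → ℤ) :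
    ∀ j, genQ (fun i => Nat.casesOn i a0 a) (j+1) = genP a j
  | 0 => rfl
  | 1 => by simp [genP, genQ]
  | (k+2) => by
      rw [show k+2+1 = (k+1)+2 from rfl, genQ, genQ_cons a0 a (k+1), genQ_cons a0 a k,
        genP]
/- ### the fundamental identity -/

lemma fund {β : ℝ} (hβ : Irrational β) :
    ∀ m, β * (gaussIter β (m+1) * (convQ β (m+1) : ℝ) + (convQ β m : ℝ))
      = gaussIter β (m+1) * (convP β (m+1) : ℝ) + (convP β m : ℝ) := by
  intro m
  induction m with
  | zero =>
    have hne : β - (⌊β⌋ : ℝ) ≠ 0 := sub_ne_zero.2 (fun hx => hβ.ne_int _ hx)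
    have hx : (β - (⌊β⌋:ℝ))⁻¹ * (β - (⌊β⌋:ℝ)) = 1 := inv_mul_cancel₀ hne
    show β * ((β - (⌊β⌋:ℝ))⁻¹ * ((1:ℤ):ℝ) + ((0:ℤ):ℝ))
      = (β - (⌊β⌋:ℝ))⁻¹ * ((cfq β 0 : ℤ):ℝ) + ((1:ℤ):ℝ)
    have : (cfq β 0 : ℝ) = (⌊β⌋ : ℝ) := by norm_cast
    rw [this]
    push_cast
    linear_combination hx
  | succ m ih =>
    have hx0 : Irrational (gaussIter β (m+1)) := irr_gaussIter hβ (m+1)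
    have hne : gaussIter β (m+1) - ((cfq β (m+1) : ℤ):ℝ) ≠ 0 :=
      sub_ne_zero.2 (fun hx => hx0.ne_int _ hx)
    have hx' : gaussIter β (m+2)
        * (gaussIter β (m+1) - ((cfq β (m+1):ℤ):ℝ)) = 1 := by
      show (gaussIter β (m+1) - (⌊gaussIter β (m+1)⌋:ℝ))⁻¹ * _ = 1
      exact inv_mul_cancel₀ hne
    have hP : (convP β (m+2) : ℝ)
        = (cfq β (m+1) : ℝ) * (convP β (m+1) : ℝ) + (convP β m : ℝ) := by
      rw [convP]; push_cast; ring
    have hQ : (convQ β (m+2) : ℝ)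
        = (cfq β (m+1) : ℝ) * (convQ β (m+1) : ℝ) + (convQ β m : ℝ) := by
      rw [convQ]; push_cast; ring
    rw [hP, hQ]
    linear_combination gaussIter β (m+2) * ih
      - (β * (convQ β (m+1):ℝ) - (convP β (m+1):ℝ)) * hx'

/- ### uniqueness of continued fraction expansions -/

lemma expand : ∀ m : ℕ, ∀ (β ω : ℝ) (a : ℕ → ℤ), Irrational β → 1 < ω →
    (∀ i, 1 ≤ i → 1 ≤ a i) →
    β * (ω * (genQ a (m+1) : ℝ) + (genQ a m : ℝ))
      = ω * (genP a (m+1) : ℝ) + (genP a m : ℝ) →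
    ∀ j ≤ m, cfq β j = a j := by
  intro m
  induction m with
  | zero =>
    intro β ω a hβ hω ha heq j hj
    interval_cases j
    have hω0 : ω ≠ 0 := by positivity
    have hβeq : β = (a 0 : ℝ) + ω⁻¹ := by
      have h1 : (genQ a 1 : ℝ) = 1 := by norm_num [genQ]
      have h0 : (genQ a 0 : ℝ) = 0 := by norm_num [genQ]
      have hp1 : (genP a 1 : ℝ) = (a 0 : ℝ) := by norm_num [genP]
      have hp0 : (genP a 0 : ℝ) = 1 := by norm_num [genP]
      rw [h1, h0, hp1, hp0] at heq
      field_simp at heq ⊢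
      linear_combination heq
    show ⌊β⌋ = a 0
    rw [hβeq]
    have h1 : 0 < ω⁻¹ := by positivity
    have h2 : ω⁻¹ < 1 := by
      rw [inv_lt_one_iff₀]; right; exact hω
    rw [Int.floor_eq_iff]
    constructor
    · linarith
    · push_cast; linarith
  | succ m ih =>
    intro β ω a hβ hω ha heq j hj
    -- shifted sequence
    set a' : ℕ → ℤ := fun i => a (i+1) with ha'def
    have ha' : ∀ i, 1 ≤ a' i := fun i => ha (i+1) (by omega)
    have ha'1 : ∀ i, 1 ≤ i → 1 ≤ a' i := fun i _ => ha' i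
    have hcons : ∀ i, (fun i => Nat.casesOn i (a 0) a') i = a i := by
      intro i; cases i <;> rfl
    have hPc : ∀ t, genP a (t+1) = a 0 * genP a' t + genQ a' t := by
      intro t
      rw [← genP_congr (fun i _ => hcons i), genP_cons]
    have hQc : ∀ t, genQ a (t+1) = genP a' t := by
      intro t
      rw [← genQ_congr (fun i _ => hcons i), genQ_cons]
    -- numerator and denominator
    set N1 : ℝ := ω * (genP a' (m+1) : ℝ) + (genP a' m : ℝ) with hN1
    set D1 : ℝ := ω * (genQ a' (m+1) : ℝ) + (genQ a' m : ℝ) with hD1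
    have hPpos : ∀ t, (1:ℤ) ≤ genP a' t := fun t => (genP_pos ha' t).1
    have hQpos := genQ_pos ha'1
    have hN1pos : 0 < N1 := by
      have h1 := hPpos (m+1); have h2 := hPpos m
      have : (1:ℝ) ≤ (genP a' (m+1) : ℝ) := by exact_mod_cast h1
      have : (1:ℝ) ≤ (genP a' m : ℝ) := by exact_mod_cast h2
      rw [hN1]; nlinarith [hPpos (m+1), (by exact_mod_cast hPpos (m+1) : (1:ℝ) ≤ (genP a' (m+1):ℝ))]
    have hD1pos : 0 < D1 := by
      have h1 : (1:ℝ) ≤ (genQ a' (m+1) : ℝ) := by exact_mod_cast (hQpos m).2.1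
      have h2 : (0:ℝ) ≤ (genQ a' m : ℝ) := by exact_mod_cast (hQpos m).1
      rw [hD1]; nlinarith
    -- main equation in terms of N1, D1
    have hkey : β * N1 = (a 0 : ℝ) * N1 + D1 := by
      have e1 := hPc (m+2-1); have e2 := hPc m; have e3 := hQc (m+1); have e4 := hQc m
      rw [show m+1+1 = m+2 from rfl] at heq
      rw [show m+2-1 = m+1 from rfl] at e1
      rw [hN1, hD1]
      have c1 : (genP a (m+2) : ℝ) = (a 0 : ℝ) * (genP a' (m+1) : ℝ) + (genQ a' (m+1) : ℝ) := by
        rw [e1]; push_cast; ring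
      have c2 : (genP a (m+1) : ℝ) = (a 0 : ℝ) * (genP a' m : ℝ) + (genQ a' m : ℝ) := by
        rw [e2]; push_cast; ring
      have c3 : (genQ a (m+2) : ℝ) = (genP a' (m+1) : ℝ) := by rw [e3]
      have c4 : (genQ a (m+1) : ℝ) = (genP a' m : ℝ) := by rw [e4]
      rw [c1, c2, c3, c4] at heq
      linear_combination heq
    have hβa : β - (a 0 : ℝ) = D1 / N1 := by
      rw [eq_div_iff (ne_of_gt hN1pos)]
      linear_combination hkey
    set β₁ : ℝ := N1 / D1 with hβ₁
    have hβ₁inv : β₁ = (β - (a 0 : ℝ))⁻¹ := by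
      rw [hβa, inv_div]
    have hβ₁irr : Irrational β₁ := by
      rw [hβ₁inv]; exact (hβ.sub_intCast (a 0)).inv
    have hβ₁eq : β₁ * (ω * (genQ a' (m+1) : ℝ) + (genQ a' m : ℝ))
        = ω * (genP a' (m+1) : ℝ) + (genP a' m : ℝ) := by
      rw [hβ₁, ← hD1, ← hN1, div_mul_cancel₀ _ (ne_of_gt hD1pos)]
    have IH := ih β₁ ω a' hβ₁irr hω ha'1 hβ₁eq
    -- β₁ > 1
    have hfl : ⌊β₁⌋ = a' 0 := IH 0 (by omega)
    have hβ₁gt : 1 < β₁ := by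
      have h1 : (1:ℤ) ≤ ⌊β₁⌋ := by rw [hfl]; exact ha' 0
      have h2 : (⌊β₁⌋ : ℝ) ≤ β₁ := Int.floor_le _
      have h3 : β₁ ≠ (⌊β₁⌋ : ℝ) := fun hx => hβ₁irr.ne_int _ hx
      have : (1:ℝ) ≤ (⌊β₁⌋ : ℝ) := by exact_mod_cast h1
      rcases lt_or_eq_of_le h2 with h|h
      · linarith
      · exact absurd h.symm h3
    -- floor of β
    have hfl0 : ⌊β⌋ = a 0 := by
      have h1 : 0 < β₁⁻¹ := by positivity
      have h2 : β₁⁻¹ < 1 := by rw [inv_lt_one_iff₀]; right; exact hβ₁gt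
      have hβval : β = (a 0 : ℝ) + β₁⁻¹ := by
        rw [hβ₁inv, inv_inv]; linarith [hβa]
      rw [hβval, Int.floor_eq_iff]
      constructor
      · linarith
      · push_cast; linarith
    have hg1 : gaussIter β 1 = β₁ := by
      show (β - (⌊β⌋:ℝ))⁻¹ = β₁
      rw [hfl0, hβa, inv_div, hβ₁]
    -- conclude
    cases j with
    | zero => exact hfl0
    | succ t =>
      rw [cfq_succ', hg1]
      exact IH t (by omega)
/- ### continued fraction expansion of rationals -/

lemma ratexp_aux : ∀ N : ℕ, ∀ q p : ℤ, q.toNat ≤ N → 1 ≤ q → IsCoprime p q →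
    ∃ (m : ℕ) (a : ℕ → ℤ), (∀ i, 1 ≤ i → 1 ≤ a i) ∧ genP a (m+1) = p ∧ genQ a (m+1) = q
      ∧ ((m = 0 ∧ a 0 = p) ∨ 2 ≤ a m) ∧ (q < p → 1 ≤ a 0) := by
  intro N
  induction N with
  | zero => intro q p hN hq _; omega
  | succ N ihN =>
    intro q p hN hq hcop
    rcases eq_or_lt_of_le hq with hq1 | hq2
    · -- q = 1
      refine ⟨0, fun i => if i = 0 then p else 1, ?_, ?_, ?_, ?_, ?_⟩
      · intro i hi
        show (1:ℤ) ≤ if i = 0 then p else 1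
        rw [if_neg (by omega : i ≠ 0)]
      · simp [genP]
      · simp [genQ, hq1]
      · left; simp
      · intro h; simp; omega
    · -- q ≥ 2
      have hq0 : (0:ℤ) < q := by omega
      set r := p % q with hr
      set a0 := p / q with ha0
      have hdm : q * a0 + r = p := by rw [hr, ha0]; linarith [Int.emod_add_mul_ediv p q]
      have hr0 : 0 ≤ r := Int.emod_nonneg p (by omega)
      have hrq : r < q := Int.emod_lt_of_pos p hq0
      have hr1 : 1 ≤ r := by
        rcases eq_or_lt_of_le hr0 with h | h
        · exfalso
          have hdvd : q ∣ p := by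
            exact ⟨a0, by rw [← hdm, ← h, add_zero]⟩
          have : IsUnit q := hcop.isUnit_of_dvd' hdvd dvd_rfl
          rw [Int.isUnit_iff] at this
          omega
        · omega
      have hcop' : IsCoprime q r := by
        have h1 : IsCoprime q p := hcop.symm
        have : IsCoprime q (p + q * (-a0)) := h1.add_mul_left_right (-a0)
        have hreq : p + q * (-a0) = r := by linear_combination -hdm
        rwa [hreq] at this
      obtain ⟨m', a', ha', hP', hQ', hlast', hfst'⟩ :=
        ihN r q (by omega) hr1 hcop'
      have ha'0 : 1 ≤ a' 0 := hfst' hrq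
      have ha'all : ∀ i, 1 ≤ a' i := by
        intro i; cases i with
        | zero => exact ha'0
        | succ t => exact ha' _ (by omega)
      refine ⟨m' + 1, fun i => Nat.casesOn i a0 a', ?_, ?_, ?_, ?_, ?_⟩
      · intro i hi
        cases i with
        | zero => omega
        | succ t => exact ha'all t
      · rw [genP_cons, hP', hQ']; linear_combination hdm
      · rw [genQ_cons, hP']
      · right
        show 2 ≤ a' m'
        rcases hlast' with ⟨hm0, hval⟩ | h2
        · rw [hm0, hval]; omega
        · exact h2
      · intro hqp
        show 1 ≤ a0
        rw [ha0]
        have : 1 * q ≤ p := by omega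
        exact Int.le_ediv_iff_mul_le hq0 |>.2 this

lemma ratexp_parity (q p : ℤ) (hq : 1 ≤ q) (hcop : IsCoprime p q) (par : ℕ) :
    ∃ (m : ℕ) (a : ℕ → ℤ), (∀ i, 1 ≤ i → 1 ≤ a i) ∧ genP a (m+1) = p ∧ genQ a (m+1) = q
      ∧ m % 2 = par % 2 := by
  obtain ⟨m, a, ha, hP, hQ, hlast, -⟩ := ratexp_aux q.toNat q p le_rfl hq hcop
  by_cases hpar : m % 2 = par % 2
  · exact ⟨m, a, ha, hP, hQ, hpar⟩
  · -- flip parity : [.., a_m] = [.., a_m - 1, 1]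
    set b : ℕ → ℤ := fun i => if i < m then a i else if i = m then a m - 1 else 1 with hb
    have hbeq : ∀ i < m, b i = a i := by intro i hi; simp [hb, hi]
    have hbm : b m = a m - 1 := by simp [hb]
    have hbm1 : b (m+1) = 1 := by simp [hb]
    have hP1 : genP b (m+1) = genP a (m+1) - genP a m := by
      cases m with
      | zero => simp [genP, hb]
      | succ t =>
        rw [genP, genP, genP_congr (b := a) (fun i hi => hbeq i (by omega)),
          genP_congr (b := a) (a := b) (fun i hi => hbeq i (by omega)), hbm]
        ring
    have hQ1 : genQ b (m+1) = genQ a (m+1) - genQ a m := by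
      cases m with
      | zero => simp [genQ, hb]
      | succ t =>
        rw [genQ, genQ, genQ_congr (b := a) (fun i hi => hbeq i (by omega)),
          genQ_congr (b := a) (a := b) (fun i hi => hbeq i (by omega)), hbm]
        ring
    have hP2 : genP b (m+2) = genP a (m+1) := by
      rw [show m+2 = m+1+1 from rfl]
      rw [genP, hbm1, hP1, genP_congr (b := a) (fun i hi => hbeq i hi)]
      ring
    have hQ2 : genQ b (m+2) = genQ a (m+1) := by
      rw [show m+2 = m+1+1 from rfl]
      rw [genQ, hbm1, hQ1, genQ_congr (b := a) (fun i hi => hbeq i hi)]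
      ring
    refine ⟨m + 1, b, ?_, by rw [hP2, hP], by rw [hQ2, hQ], by omega⟩
    intro i hi
    rcases lt_trichotomy i m with h | h | h
    · rw [hbeq i h]; exact ha i hi
    · have ham : 2 ≤ a m := by
        rcases hlast with ⟨hm0, -⟩ | h2
        · omega
        · exact h2
      rw [h, hbm]; omega
    · have h1 : ¬ i < m := by omega
      have h2 : i ≠ m := by omega
      show (1:ℤ) ≤ if i < m then a i else if i = m then a m - 1 else 1
      rw [if_neg h1, if_neg h2]
/- ### Legendre's theorem -/

lemma legendre {β : ℝ} (hβ : Irrational β) {p q : ℤ} (hq : 1 ≤ q)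
    (hcop : IsCoprime p q) (happ : |β - (p:ℝ)/(q:ℝ)| < 1/(2*(q:ℝ)^2)) :
    ∃ j : ℕ, convP β (j+1) = p ∧ convQ β (j+1) = q := by
  have hqR : (0:ℝ) < (q:ℝ) := by exact_mod_cast hq
  obtain ⟨u, hu⟩ : ∃ u : ℝ, u = (q:ℝ)*β - (p:ℝ) := ⟨_, rfl⟩
  have hu0 : u ≠ 0 := by
    rw [hu, sub_ne_zero]
    intro h
    apply hβ
    exact ⟨(p:ℚ)/(q:ℚ), by push_cast; field_simp; linear_combination -h⟩
  have huabs : |u| < 1/(2*(q:ℝ)) := by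
    have h0 : β - (p:ℝ)/(q:ℝ) = u / (q:ℝ) := by
      rw [hu]; field_simp
    have h1 : |β - (p:ℝ)/(q:ℝ)| = |u| / (q:ℝ) := by
      rw [h0, abs_div, abs_of_pos hqR]
    rw [h1, div_lt_iff₀ hqR] at happ
    calc |u| < 1/(2*(q:ℝ)^2) * (q:ℝ) := happ
    _ = 1/(2*(q:ℝ)) := by field_simp
  obtain ⟨m, a, ha, hP, hQ, hpar⟩ := ratexp_parity q p hq hcop (if 0 < u then 0 else 1)
  have hsign : 0 < (-1:ℝ)^m * u := by
    by_cases hdp : 0 < u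
    · rw [if_pos hdp] at hpar
      have hev : Even m := Nat.even_iff.2 (by omega)
      rw [hev.neg_one_pow]; linarith
    · rw [if_neg hdp] at hpar
      have hdn : u < 0 := lt_of_le_of_ne (not_lt.1 hdp) hu0
      have hod : Odd m := Nat.odd_iff.2 (by omega)
      rw [hod.neg_one_pow]; linarith
  have he2 : (-1:ℝ)^m * (-1:ℝ)^m = 1 := by
    rw [← pow_add]
    exact Even.neg_one_pow ⟨m, by ring⟩
  obtain ⟨s, hs⟩ : ∃ s : ℝ, s = (-1:ℝ)^m * u := ⟨_, rfl⟩
  have hspos : 0 < s := hs ▸ hsign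
  have hslt : s < 1/(2*(q:ℝ)) := by
    have h1 : s ≤ |u| := by
      rw [hs]
      calc (-1:ℝ)^m * u ≤ |(-1:ℝ)^m * u| := le_abs_self _
      _ = |(-1:ℝ)^m| * |u| := abs_mul _ _
      _ = |u| := by rw [abs_pow, abs_neg, abs_one, one_pow, one_mul]
    linarith
  -- determinant
  have hdetR : (genP a m : ℝ) * (q:ℝ) - (p:ℝ) * (genQ a m : ℝ) = (-1:ℝ)^m := by
    have := gen_det a m
    rw [hP, hQ] at this
    exact_mod_cast congrArg (fun z : ℤ => (z:ℝ)) this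
  have hQ0 : (0:ℝ) ≤ (genQ a m : ℝ) := by exact_mod_cast (genQ_pos ha m).1
  have hQle : (genQ a m : ℝ) ≤ (q:ℝ) := by
    have := (genQ_pos ha m).2.2
    rw [hQ] at this
    exact_mod_cast this
  have hnum : (q:ℝ) * ((genP a m : ℝ) - (genQ a m : ℝ) * β)
      = (-1:ℝ)^m - (genQ a m : ℝ) * u := by
    rw [hu]
    linear_combination hdetR
  obtain ⟨ω, hω⟩ : ∃ ω : ℝ, ω = ((genP a m : ℝ) - (genQ a m : ℝ) * β) / u := ⟨_, rfl⟩
  have hωeq : ω * u = (genP a m : ℝ) - (genQ a m : ℝ) * β := by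
    rw [hω]; exact div_mul_cancel₀ _ hu0
  have hωgt : 1 < ω := by
    have hd1 : 0 < (-1:ℝ)^m * (q:ℝ) * u := by
      have : (-1:ℝ)^m * (q:ℝ) * u = (q:ℝ) * s := by rw [hs]; ring
      rw [this]; positivity
    have hne : (-1:ℝ)^m * (q:ℝ) ≠ 0 := by
      intro h
      have := he2
      rw [show ((-1:ℝ)^m * (-1:ℝ)^m) = ((-1:ℝ)^m * (q:ℝ)) * ((-1:ℝ)^m / (q:ℝ)) by
        field_simp] at this
      rw [h, zero_mul] at this
      norm_num at this
    rw [hω, ← mul_div_mul_left ((genP a m : ℝ) - (genQ a m : ℝ) * β) u hne]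
    rw [show (-1:ℝ)^m * (q:ℝ) * u = (q:ℝ) * s by rw [hs]; ring]
    rw [lt_div_iff₀ (by positivity : (0:ℝ) < (q:ℝ) * s), one_mul]
    have hkey : (-1:ℝ)^m * (q:ℝ) * ((genP a m : ℝ) - (genQ a m : ℝ) * β)
        = 1 - (genQ a m : ℝ) * s := by
      rw [hs]
      linear_combination ((-1:ℝ)^m) * hnum + he2
    rw [hkey]
    have h4 : (genQ a m : ℝ) * s ≤ (q:ℝ) * s := by nlinarith
    have h5 : 2 * ((q:ℝ) * s) < 1 := by
      have := mul_lt_mul_of_pos_left hslt (by positivity : (0:ℝ) < 2*(q:ℝ))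
      calc 2 * ((q:ℝ) * s) = 2*(q:ℝ) * s := by ring
      _ < 2*(q:ℝ) * (1/(2*(q:ℝ))) := this
      _ = 1 := by field_simp
    linarith
  -- apply expansion uniqueness
  have hexp : β * (ω * (genQ a (m+1) : ℝ) + (genQ a m : ℝ))
      = ω * (genP a (m+1) : ℝ) + (genP a m : ℝ) := by
    rw [hP, hQ]
    rw [hu] at hωeq
    linear_combination hωeq
  have hcf : ∀ j ≤ m, cfq β j = a j := expand m β ω a hβ hωgt ha hexp
  refine ⟨m, ?_, ?_⟩
  · rw [convP_eq, genP_congr (b := a) (fun i hi => hcf i (by omega)), hP]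
  · rw [convQ_eq, genQ_congr (b := a) (fun i hi => hcf i (by omega)), hQ]
/- ### convergent facts -/

lemma conv_det (β : ℝ) (m : ℕ) :
    convP β m * convQ β (m+1) - convP β (m+1) * convQ β m = (-1)^m := by
  rw [convP_eq, convP_eq, convQ_eq, convQ_eq]
  exact gen_det (cfq β) m

lemma cfq_admissible {β : ℝ} (hβ : Irrational β) : ∀ i, 1 ≤ i → 1 ≤ cfq β i := by
  intro i hi
  obtain ⟨t, rfl⟩ : ∃ t, i = t + 1 := ⟨i - 1, by omega⟩
  exact cfq_pos hβ t

lemma convQ_facts {β : ℝ} (hβ : Irrational β) (j : ℕ) :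
    0 ≤ convQ β j ∧ 1 ≤ convQ β (j+1) ∧ convQ β j ≤ convQ β (j+1) := by
  rw [convQ_eq, convQ_eq]
  exact genQ_pos (cfq_admissible hβ) j

theorem convergent_of_mul_and_height_bound
    (α : ℝ) (hα : Irrational α) (hpos : 0 < α) (n : ℕ) (k : ℕ) (q' : ℤ)
    (hdvd : convQ α (k + 1) = (n : ℤ) * q') (hlt : (n : ℤ) < convQ α (k + 1)) :
    IsConvergent ((n : ℝ) * α) ((convP α (k + 1) : ℚ) / (q' : ℚ)) ∧
    ∃ i : ℕ, 1 ≤ i ∧ (n : ℤ) ≤ cfq ((n : ℝ) * α) i := by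
  have hqk1 : 1 ≤ convQ α (k+1) := (convQ_facts hα k).2.1
  have hn1 : 1 ≤ n := by
    by_contra h
    have hn0 : n = 0 := by omega
    rw [hn0] at hdvd
    simp at hdvd
    omega
  have hq'1 : 1 ≤ q' := by nlinarith [hdvd, hqk1, (by exact_mod_cast hn1 : (1:ℤ) ≤ (n:ℤ))]
  have hk1 : 1 ≤ k := by
    by_contra h
    have hk0 : k = 0 := by omega
    rw [hk0] at hlt
    have h01 : convQ α (0+1) = 1 := rfl
    omega
  have hqkk : 1 ≤ convQ α k := by
    obtain ⟨k', rfl⟩ : ∃ k', k = k' + 1 := ⟨k - 1, by omega⟩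
    exact (convQ_facts hα k').2.1
  rcases eq_or_lt_of_le hn1 with h1 | h2
  · -- n = 1 : trivial case
    have hc1 : ((n:ℕ):ℝ) = 1 := by rw [← h1]; norm_num
    have hq'eq : q' = convQ α (k+1) := by rw [hdvd, ← h1]; ring
    constructor
    · refine ⟨k, ?_⟩
      rw [hc1, one_mul, hq'eq]
    · refine ⟨1, le_refl 1, ?_⟩
      rw [hc1, one_mul, ← h1]
      exact cfq_pos hα 0
  · -- n ≥ 2
    have hn0 : n ≠ 0 := by omega
    have hβ : Irrational ((n:ℝ) * α) := hα.natCast_mul hn0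
    have hx : 1 < gaussIter α (k+1) := gaussIter_gt_one hα k
    have hF := fund hα k
    have hdet := conv_det α k
    -- cast facts
    have hq'R : (0:ℝ) < (q':ℝ) := by exact_mod_cast hq'1
    have hq'ne : (q':ℝ) ≠ 0 := ne_of_gt hq'R
    have hnqR : ((n:ℕ):ℝ) * (q':ℝ) = ((convQ α (k+1)):ℝ) := by exact_mod_cast hdvd.symm
    have hqk1R : (1:ℝ) ≤ ((convQ α (k+1)):ℝ) := by exact_mod_cast hqk1
    have hqkkR : (1:ℝ) ≤ ((convQ α k):ℝ) := by exact_mod_cast hqkk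
    have hnR : (2:ℝ) ≤ ((n:ℕ):ℝ) := by exact_mod_cast h2
    have hdetR : ((convP α k):ℝ) * ((convQ α (k+1)):ℝ)
        - ((convP α (k+1)):ℝ) * ((convQ α k):ℝ) = (-1:ℝ)^k := by
      exact_mod_cast congrArg (fun z : ℤ => (z:ℝ)) hdet
    -- the distance to the convergent
    have hXpos : (0:ℝ) < gaussIter α (k+1) * ((convQ α (k+1)):ℝ) + ((convQ α k):ℝ) := by
      nlinarith
    have hXgt : 2 * (q':ℝ) < gaussIter α (k+1) * ((convQ α (k+1)):ℝ) + ((convQ α k):ℝ) := by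
      nlinarith
    have hmain : ((n:ℝ) * α) * ((q':ℝ) * (gaussIter α (k+1) * ((convQ α (k+1)):ℝ) + ((convQ α k):ℝ)))
        - ((convP α (k+1)):ℝ) * (gaussIter α (k+1) * ((convQ α (k+1)):ℝ) + ((convQ α k):ℝ))
        = (-1:ℝ)^k := by
      linear_combination ((convQ α (k+1)):ℝ) * hF + hdetR
        + (α * (gaussIter α (k+1) * ((convQ α (k+1)):ℝ) + ((convQ α k):ℝ))) * hnqR
    have hdiff : (n:ℝ) * α - ((convP α (k+1)):ℝ)/(q':ℝ)
        = (-1:ℝ)^k / ((q':ℝ) * (gaussIter α (k+1) * ((convQ α (k+1)):ℝ) + ((convQ α k):ℝ))) := by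
      rw [eq_div_iff (by positivity : ((q':ℝ) * (gaussIter α (k+1) * ((convQ α (k+1)):ℝ) + ((convQ α k):ℝ))) ≠ 0)]
      rw [sub_mul, show ((convP α (k+1)):ℝ)/(q':ℝ) * ((q':ℝ) * (gaussIter α (k+1) * ((convQ α (k+1)):ℝ) + ((convQ α k):ℝ)))
        = ((convP α (k+1)):ℝ) * (gaussIter α (k+1) * ((convQ α (k+1)):ℝ) + ((convQ α k):ℝ)) by
          field_simp]
      linear_combination hmain
    have happ : |(n:ℝ) * α - ((convP α (k+1)):ℝ)/(q':ℝ)| < 1/(2*(q':ℝ)^2) := by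
      rw [hdiff, abs_div, abs_pow, abs_neg, abs_one, one_pow,
        abs_of_pos (by positivity : (0:ℝ) < (q':ℝ) * (gaussIter α (k+1) * ((convQ α (k+1)):ℝ) + ((convQ α k):ℝ)))]
      rw [div_lt_div_iff₀ (by positivity) (by positivity)]
      nlinarith
    -- coprimality
    have hone : (-1:ℤ)^k * (-1:ℤ)^k = 1 := by
      rw [← pow_add]; exact Even.neg_one_pow ⟨k, by ring⟩
    have hcopk : IsCoprime (convP α (k+1)) (convQ α (k+1)) := by
      refine ⟨(-1:ℤ)^k * (-(convQ α k)), (-1:ℤ)^k * (convP α k), ?_⟩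
      linear_combination ((-1:ℤ)^k) * hdet + hone
    have hcop : IsCoprime (convP α (k+1)) q' :=
      hcopk.of_isCoprime_of_dvd_right ⟨(n:ℤ), by rw [hdvd]; ring⟩
    -- Legendre
    obtain ⟨j, hPj, hQj⟩ := legendre hβ hq'1 hcop happ
    refine ⟨⟨j, by rw [hPj, hQj]⟩, ⟨j+1, by omega, ?_⟩⟩
    -- the height bound
    have hy : 1 < gaussIter ((n:ℝ)*α) (j+1) := gaussIter_gt_one hβ j
    have hFb := fund hβ j
    rw [hPj, hQj] at hFb
    have hdetb := conv_det ((n:ℝ)*α) j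
    rw [hPj, hQj] at hdetb
    have hdetbR : ((convP ((n:ℝ)*α) j):ℝ) * (q':ℝ)
        - ((convP α (k+1)):ℝ) * ((convQ ((n:ℝ)*α) j):ℝ) = (-1:ℝ)^j := by
      exact_mod_cast congrArg (fun z : ℤ => (z:ℝ)) hdetb
    have hQjpos : (0:ℝ) ≤ ((convQ ((n:ℝ)*α) j):ℝ) := by
      exact_mod_cast (convQ_facts hβ j).1
    have hQjle : ((convQ ((n:ℝ)*α) j):ℝ) ≤ (q':ℝ) := by
      have := (convQ_facts hβ j).2.2
      rw [hQj] at this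
      exact_mod_cast this
    have hYpos : (0:ℝ) < gaussIter ((n:ℝ)*α) (j+1) * (q':ℝ) + ((convQ ((n:ℝ)*α) j):ℝ) := by
      nlinarith
    have e2 : ((n:ℝ)*α - ((convP α (k+1)):ℝ)/(q':ℝ))
        * ((q':ℝ) * (gaussIter ((n:ℝ)*α) (j+1) * (q':ℝ) + ((convQ ((n:ℝ)*α) j):ℝ)))
        = (-1:ℝ)^j := by
      rw [sub_mul, show ((convP α (k+1)):ℝ)/(q':ℝ) * ((q':ℝ) * (gaussIter ((n:ℝ)*α) (j+1) * (q':ℝ) + ((convQ ((n:ℝ)*α) j):ℝ)))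
        = ((convP α (k+1)):ℝ) * (gaussIter ((n:ℝ)*α) (j+1) * (q':ℝ) + ((convQ ((n:ℝ)*α) j):ℝ)) by
          field_simp]
      linear_combination (q':ℝ) * hFb + hdetbR
    rw [hdiff] at e2
    have e3 : (-1:ℝ)^k * (gaussIter ((n:ℝ)*α) (j+1) * (q':ℝ) + ((convQ ((n:ℝ)*α) j):ℝ))
        = (-1:ℝ)^j * (gaussIter α (k+1) * ((convQ α (k+1)):ℝ) + ((convQ α k):ℝ)) := by
      rw [div_mul_eq_mul_div, div_eq_iff (by positivity : ((q':ℝ) * (gaussIter α (k+1) * ((convQ α (k+1)):ℝ) + ((convQ α k):ℝ))) ≠ 0)] at e2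
      exact mul_left_cancel₀ hq'ne (by linear_combination e2)
    -- parity analysis: signs must match
    suffices hfin : gaussIter ((n:ℝ)*α) (j+1) * (q':ℝ) + ((convQ ((n:ℝ)*α) j):ℝ)
          = gaussIter α (k+1) * ((convQ α (k+1)):ℝ) + ((convQ α k):ℝ) →
        (-1:ℤ)^j = (-1:ℤ)^k → (n:ℤ) ≤ cfq ((n:ℝ)*α) (j+1) by
      rcases Nat.even_or_odd k with hk | hk <;> rcases Nat.even_or_odd j with hj | hj
      · rw [hk.neg_one_pow, hj.neg_one_pow, one_mul, one_mul] at e3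
        exact hfin e3 (by rw [hj.neg_one_pow, hk.neg_one_pow])
      · exfalso
        rw [hk.neg_one_pow, hj.neg_one_pow, one_mul, neg_one_mul] at e3
        linarith
      · exfalso
        rw [hk.neg_one_pow, hj.neg_one_pow, one_mul, neg_one_mul] at e3
        linarith
      · rw [hk.neg_one_pow, hj.neg_one_pow, neg_one_mul, neg_one_mul] at e3
        exact hfin (by linarith) (by rw [hj.neg_one_pow, hk.neg_one_pow])
    intro hYX hsame
    -- integer congruence : q' divides (convQ α k - convQ β j)
    rw [hsame] at hdetb
    have hdvd2 : q' ∣ (convP α (k+1)) * (convQ α k - convQ ((n:ℝ)*α) j) := by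
      refine ⟨(convP α k) * (n:ℤ) - convP ((n:ℝ)*α) j, ?_⟩
      linear_combination hdetb - hdet + (convP α k) * hdvd
    have hdvd3 : q' ∣ (convQ α k - convQ ((n:ℝ)*α) j) :=
      (hcop.symm).dvd_of_dvd_mul_left hdvd2
    obtain ⟨w, hw⟩ := hdvd3
    have hQjle' : convQ ((n:ℝ)*α) j ≤ q' := by
      have := (convQ_facts hβ j).2.2
      rwa [hQj] at this
    have hwpos : 0 ≤ w := by
      have h1 : 1 - q' ≤ q' * w := by rw [← hw]; omega
      by_contra hneg
      have h2 : w ≤ -1 := by omega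
      have h3 : q' * w ≤ q' * (-1) :=
        mul_le_mul_of_nonneg_left h2 (by omega)
      omega
    have hwR : ((convQ α k):ℝ) - ((convQ ((n:ℝ)*α) j):ℝ) = (q':ℝ) * (w:ℝ) := by
      exact_mod_cast congrArg (fun z : ℤ => (z:ℝ)) hw
    have hy' : gaussIter ((n:ℝ)*α) (j+1) = ((n:ℕ):ℝ) * gaussIter α (k+1) + (w:ℝ) := by
      refine mul_right_cancel₀ hq'ne ?_
      linear_combination hYX + hwR - gaussIter α (k+1) * hnqR
    have hygt : ((n:ℕ):ℝ) < gaussIter ((n:ℝ)*α) (j+1) := by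
      have hwR0 : (0:ℝ) ≤ (w:ℝ) := by exact_mod_cast hwpos
      have h5 : ((n:ℕ):ℝ) * 1 < ((n:ℕ):ℝ) * gaussIter α (k+1) :=
        mul_lt_mul_of_pos_left hx (by linarith)
      rw [hy']
      linarith
    show (n:ℤ) ≤ ⌊gaussIter ((n:ℝ)*α) (j+1)⌋
    rw [Int.le_floor]
    push_cast
    push_cast at hygt
    linarith
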